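/- Let A ∈ ℝ^{n×n}, B ∈ ℝ^{n×m}, X ⊆ ℝⁿ, U ⊆ ℝᵐ, and let X∞ := {x : ∃ (u(k)) with u(k) ∈ U, φ(k;x,u) ∈ X for all k, and φ(k;x,u) → 0} be the maximal controllable set. Let V_p : ℝⁿ → ℝ, α₁ > 0, λ ∈ [0,1), c > 0, β > 0 be such that α₁‖y‖² ≤ V_p(y) for all y, and for every y ∈ X∞ there exists u ∈ U with ‖u‖ ≤ c‖y‖, A y + B u ∈ X∞, V_p(A y + B u) ≤ λ² V_p(y), and β V_p(A y + B u) + ℓ(y,u) ≤ β V_p(y), where ℓ(x,u) := xᵀQx + uᵀRu with Q ⪰ 0, R ⪰ 0 symmetric. Let V⁰_∞(x) := inf over all admissible infinite-horizon sequences u ∈ U_∞(x) of Σ_{k=0}^∞ ℓ(φ(k;x,u),u(k)), and let V⁰_{N,β}(x) be the optimal value of the N-horizon problem with terminal cost β V_p and terminal constraint φ(N;x,u) ∈ X∞. Then V⁰_∞(x) ≤ V⁰_{N,β}(x) for every N ∈ ℕ and every x ∈ X∞. -/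

import Mathlib

open scoped Matrix

/-- The state `φ(k; x, u)` of the linear system `x⁺ = A x + B u` at time `k`,
starting from `x(0) = x` under the control sequence `u`. -/
noncomputable def traj {n m : ℕ} (A : Matrix (Fin n) (Fin n) ℝ) (B : Matrix (Fin n) (Fin m) ℝ)
    (x : EuclideanSpace ℝ (Fin n)) (u : ℕ → EuclideanSpace ℝ (Fin m)) :
    ℕ → EuclideanSpace ℝ (Fin n)
  | 0 => x
  | k + 1 => (WithLp.toLp 2 (A.mulVec (traj A B x u k) + B.mulVec (u k)) : EuclideanSpace ℝ (Fin n))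

/-- The stage cost `ℓ(x,u) = xᵀQx + uᵀRu`. -/
noncomputable def stageCost {n m : ℕ} (Q : Matrix (Fin n) (Fin n) ℝ)
    (R : Matrix (Fin m) (Fin m) ℝ) (x : EuclideanSpace ℝ (Fin n))
    (u : EuclideanSpace ℝ (Fin m)) : ℝ :=
  (x : Fin n → ℝ) ⬝ᵥ Q.mulVec x + (u : Fin m → ℝ) ⬝ᵥ R.mulVec u

/-- The optimal value `V⁰_{N,β}(x)` of the `N`-horizon problem with terminal cost
`β V_p` and terminal constraint `φ(N; x, u) ∈ X∞`. -/
noncomputable def V0 {n m : ℕ} (A : Matrix (Fin n) (Fin n) ℝ) (B : Matrix (Fin n) (Fin m) ℝ)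
    (X : Set (EuclideanSpace ℝ (Fin n))) (U : Set (EuclideanSpace ℝ (Fin m)))
    (Xinf : Set (EuclideanSpace ℝ (Fin n)))
    (Q : Matrix (Fin n) (Fin n) ℝ) (R : Matrix (Fin m) (Fin m) ℝ)
    (Vp : EuclideanSpace ℝ (Fin n) → ℝ) (β : ℝ) (N : ℕ) (x : EuclideanSpace ℝ (Fin n)) : ℝ :=
  sInf {v : ℝ | ∃ u : ℕ → EuclideanSpace ℝ (Fin m),
    (∀ k < N, u k ∈ U) ∧ (∀ k < N, traj A B x u k ∈ X) ∧ traj A B x u N ∈ Xinf ∧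
    v = β * Vp (traj A B x u N) +
      ∑ k ∈ Finset.range N, stageCost Q R (traj A B x u k) (u k)}

/-- The optimal value `V⁰_∞(x)` of the infinite-horizon problem over admissible
sequences `u ∈ U_∞(x)` (inputs in `U`, states in `X`, state converging to `0`). -/
noncomputable def Vinf0 {n m : ℕ} (A : Matrix (Fin n) (Fin n) ℝ) (B : Matrix (Fin n) (Fin m) ℝ)
    (X : Set (EuclideanSpace ℝ (Fin n))) (U : Set (EuclideanSpace ℝ (Fin m)))
    (Q : Matrix (Fin n) (Fin n) ℝ) (R : Matrix (Fin m) (Fin m) ℝ)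
    (x : EuclideanSpace ℝ (Fin n)) : ℝ :=
  sInf {v : ℝ | ∃ u : ℕ → EuclideanSpace ℝ (Fin m),
    (∀ k, u k ∈ U) ∧ (∀ k, traj A B x u k ∈ X) ∧
    Filter.Tendsto (fun k => traj A B x u k) Filter.atTop (nhds 0) ∧
    v = ∑' k : ℕ, stageCost Q R (traj A B x u k) (u k)}

/-- Under the stated assumptions on `V_p` (quadratic lower bound,
`λ`-decay with admissible inputs of norm `≤ c‖y‖`, and `β`-weighted decrease on the
maximal controllable set `X∞`), the infinite-horizon optimal value is a lower bound for
the finite-horizon optimal values: `V⁰_∞(x) ≤ V⁰_{N,β}(x)` for all `N` and `x ∈ X∞`. -/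
theorem stmt_8 {n m : ℕ} (A : Matrix (Fin n) (Fin n) ℝ) (B : Matrix (Fin n) (Fin m) ℝ)
    (X : Set (EuclideanSpace ℝ (Fin n))) (U : Set (EuclideanSpace ℝ (Fin m)))
    (Q : Matrix (Fin n) (Fin n) ℝ) (R : Matrix (Fin m) (Fin m) ℝ)
    (hQ : Q.PosSemidef) (hR : R.PosSemidef)
    (Xinf : Set (EuclideanSpace ℝ (Fin n)))
    (hXinf : Xinf = {x | ∃ u : ℕ → EuclideanSpace ℝ (Fin m),
      (∀ k, u k ∈ U) ∧ (∀ k, traj A B x u k ∈ X) ∧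
      Filter.Tendsto (fun k => traj A B x u k) Filter.atTop (nhds 0)})
    (Vp : EuclideanSpace ℝ (Fin n) → ℝ) (α₁ lam c β : ℝ)
    (hα₁ : 0 < α₁) (hlam0 : 0 ≤ lam) (hlam1 : lam < 1) (hc : 0 < c) (hβ : 0 < β)
    (hlow : ∀ y : EuclideanSpace ℝ (Fin n), α₁ * ‖y‖ ^ 2 ≤ Vp y)
    (hdec : ∀ y ∈ Xinf, ∃ u ∈ U, ‖u‖ ≤ c * ‖y‖ ∧
      (WithLp.toLp 2 (A.mulVec y + B.mulVec u) : EuclideanSpace ℝ (Fin n)) ∈ Xinf ∧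
      Vp (WithLp.toLp 2 (A.mulVec y + B.mulVec u) : EuclideanSpace ℝ (Fin n)) ≤ lam ^ 2 * Vp y ∧
      β * Vp (WithLp.toLp 2 (A.mulVec y + B.mulVec u) : EuclideanSpace ℝ (Fin n)) + stageCost Q R y u ≤
        β * Vp y) :
    ∀ N : ℕ, ∀ x ∈ Xinf,
      Vinf0 A B X U Q R x ≤ V0 A B X U Xinf Q R Vp β N x := by
  classical
  intro N x hx
  -- stage cost is nonnegative
  have hℓ : ∀ (y : EuclideanSpace ℝ (Fin n)) (v : EuclideanSpace ℝ (Fin m)),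
      0 ≤ stageCost Q R y v := by
    intro y v
    have h1 := hQ.re_dotProduct_nonneg (y : Fin n → ℝ)
    have h2 := hR.re_dotProduct_nonneg (v : Fin m → ℝ)
    simp only [RCLike.star_def, starRingEnd_apply, star_trivial] at h1 h2
    simpa [stageCost, Matrix.mulVec] using add_nonneg h1 h2
  -- Vp is nonnegative
  have hVp0 : ∀ y : EuclideanSpace ℝ (Fin n), 0 ≤ Vp y := fun y =>
    le_trans (by positivity) (hlow y)
  -- Xinf is contained in X
  have hXinfX : Xinf ⊆ X := by
    intro z hz
    rw [hXinf] at hz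
    obtain ⟨u, -, hX, -⟩ := hz
    exact hX 0
  choose! uu hUu hnorm hXd hVd hβd using hdec
  -- the closed-loop state sequence starting from z
  set s : EuclideanSpace ℝ (Fin n) → ℕ → EuclideanSpace ℝ (Fin n) :=
    fun z k => Nat.rec z
      (fun _ p => (WithLp.toLp 2 (A.mulVec p + B.mulVec (uu p)) : EuclideanSpace ℝ (Fin n))) k with hs
  have hs0 : ∀ z, s z 0 = z := fun _ => rfl
  have hsS : ∀ z k, s z (k + 1) =
      (WithLp.toLp 2 (A.mulVec (s z k) + B.mulVec (uu (s z k))) : EuclideanSpace ℝ (Fin n)) :=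
    fun _ _ => rfl
  have hsXinf : ∀ z ∈ Xinf, ∀ k, s z k ∈ Xinf := by
    intro z hz k
    induction k with
    | zero => exact hz
    | succ k ih => rw [hsS]; exact hXd _ ih
  -- the closed-loop trajectory coincides with s
  have htraj : ∀ z k, traj A B z (fun j => uu (s z j)) k = s z k := by
    intro z k
    induction k with
    | zero => rfl
    | succ k ih => rw [traj, ih, hsS]
  -- Vp decays geometrically along s
  have hVgeo : ∀ z ∈ Xinf, ∀ k, Vp (s z k) ≤ (lam ^ 2) ^ k * Vp z := by
    intro z hz k
    induction k with
    | zero => simp [hs0]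
    | succ k ih =>
      calc Vp (s z (k + 1)) ≤ lam ^ 2 * Vp (s z k) := by
            rw [hsS]; exact hVd _ (hsXinf z hz k)
        _ ≤ lam ^ 2 * ((lam ^ 2) ^ k * Vp z) := by
            apply mul_le_mul_of_nonneg_left ih (by positivity)
        _ = (lam ^ 2) ^ (k + 1) * Vp z := by ring
  -- s tends to 0
  have hstend : ∀ z ∈ Xinf, Filter.Tendsto (fun k => s z k) Filter.atTop (nhds 0) := by
    intro z hz
    rw [tendsto_zero_iff_norm_tendsto_zero]
    have hsq : Filter.Tendsto (fun k => ‖s z k‖ ^ 2) Filter.atTop (nhds 0) := by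
      have hup : Filter.Tendsto (fun k : ℕ => (lam ^ 2) ^ k * (Vp z / α₁))
          Filter.atTop (nhds 0) := by
        rw [show (0 : ℝ) = 0 * (Vp z / α₁) by ring]
        exact Filter.Tendsto.mul_const _
          (tendsto_pow_atTop_nhds_zero_of_lt_one (by positivity)
            (by nlinarith))
      refine squeeze_zero (fun k => by positivity) (fun k => ?_) hup
      have h1 : α₁ * ‖s z k‖ ^ 2 ≤ (lam ^ 2) ^ k * Vp z :=
        le_trans (hlow _) (hVgeo z hz k)
      rw [div_eq_mul_inv]
      calc ‖s z k‖ ^ 2 = (α₁ * ‖s z k‖ ^ 2) * α₁⁻¹ := by field_simp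
        _ ≤ ((lam ^ 2) ^ k * Vp z) * α₁⁻¹ := by
            apply mul_le_mul_of_nonneg_right h1 (by positivity)
        _ = (lam ^ 2) ^ k * (Vp z * α₁⁻¹) := by ring
    have := (Real.continuous_sqrt.tendsto 0).comp hsq
    simpa [Function.comp_def, Real.sqrt_sq (norm_nonneg _)] using this
  -- partial sums of stage costs along s are bounded by β * Vp z
  have hcost : ∀ z ∈ Xinf, ∀ K : ℕ,
      ∑ k ∈ Finset.range K, stageCost Q R (s z k) (uu (s z k)) ≤ β * Vp z := by
    intro z hz K
    have htel : ∀ K : ℕ,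
        ∑ k ∈ Finset.range K, stageCost Q R (s z k) (uu (s z k)) + β * Vp (s z K)
          ≤ β * Vp z := by
      intro K
      induction K with
      | zero => simp [hs0]
      | succ K ih =>
        rw [Finset.sum_range_succ]
        have hstep : β * Vp (s z (K + 1)) + stageCost Q R (s z K) (uu (s z K)) ≤
            β * Vp (s z K) := by
          rw [hsS]; exact hβd _ (hsXinf z hz K)
        linarith
    have := htel K
    nlinarith [hVp0 (s z K)]
  have hsum : ∀ z ∈ Xinf, Summable (fun k => stageCost Q R (s z k) (uu (s z k))) :=
    fun z hz => summable_of_sum_range_le (fun k => hℓ _ _) (hcost z hz)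
  have htsum : ∀ z ∈ Xinf,
      ∑' k, stageCost Q R (s z k) (uu (s z k)) ≤ β * Vp z :=
    fun z hz => Real.tsum_le_of_sum_range_le (fun k => hℓ _ _) (hcost z hz)
  -- the infinite-horizon feasible set is bounded below by 0
  have hbdd : BddBelow {v : ℝ | ∃ u : ℕ → EuclideanSpace ℝ (Fin m),
      (∀ k, u k ∈ U) ∧ (∀ k, traj A B x u k ∈ X) ∧
      Filter.Tendsto (fun k => traj A B x u k) Filter.atTop (nhds 0) ∧
      v = ∑' k : ℕ, stageCost Q R (traj A B x u k) (u k)} := by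
    refine ⟨0, ?_⟩
    rintro v ⟨u, -, -, -, rfl⟩
    exact tsum_nonneg fun k => hℓ _ _
  -- V0's feasible set is nonempty
  have hne : Set.Nonempty {v : ℝ | ∃ u : ℕ → EuclideanSpace ℝ (Fin m),
      (∀ k < N, u k ∈ U) ∧ (∀ k < N, traj A B x u k ∈ X) ∧ traj A B x u N ∈ Xinf ∧
      v = β * Vp (traj A B x u N) +
        ∑ k ∈ Finset.range N, stageCost Q R (traj A B x u k) (u k)} := by
    refine ⟨_, fun j => uu (s x j), ?_, ?_, ?_, rfl⟩
    · intro k _; exact hUu _ (hsXinf x hx k)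
    · intro k _; rw [htraj]; exact hXinfX (hsXinf x hx k)
    · rw [htraj]; exact hsXinf x hx N
  rw [Vinf0, V0]
  refine le_csInf hne ?_
  rintro v ⟨u, hUk, hXk, hT, rfl⟩
  set z := traj A B x u N with hz
  have hzXinf : z ∈ Xinf := hT
  -- concatenated control: u for k < N, closed loop afterwards
  set w : ℕ → EuclideanSpace ℝ (Fin m) :=
    fun k => if k < N then u k else uu (s z (k - N)) with hw
  have htrajw : ∀ k ≤ N, traj A B x w k = traj A B x u k := by
    intro k hk
    induction k with
    | zero => rfl
    | succ k ih =>
      have hkN : k < N := hk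
      rw [traj, traj, ih (le_of_lt hkN), hw]
      simp [hkN]
  have htrajw2 : ∀ j : ℕ, traj A B x w (N + j) = s z j := by
    intro j
    induction j with
    | zero => rw [Nat.add_zero, htrajw N le_rfl, hs0]
    | succ j ih =>
      rw [show N + (j + 1) = (N + j) + 1 by ring, traj, ih, hsS, hw]
      simp [Nat.add_sub_cancel_left]
  refine le_trans (csInf_le hbdd ⟨w, ?_, ?_, ?_, rfl⟩) ?_
  · -- controls admissible
    intro k
    rw [hw]
    by_cases hk : k < N
    · simpa [hk] using hUk k hk
    · simp only [hk, if_false]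
      exact hUu _ (hsXinf z hzXinf (k - N))
  · -- states admissible
    intro k
    by_cases hk : k < N
    · rw [htrajw k (le_of_lt hk)]; exact hXk k hk
    · have : k = N + (k - N) := by omega
      rw [this, htrajw2]
      exact hXinfX (hsXinf z hzXinf (k - N))
  · -- convergence to 0
    have h1 : Filter.Tendsto (fun j => traj A B x w (j + N)) Filter.atTop (nhds 0) := by
      have : (fun j => traj A B x w (j + N)) = fun j => s z j := by
        funext j; rw [Nat.add_comm, htrajw2]
      rw [this]; exact hstend z hzXinf
    exact (Filter.tendsto_add_atTop_iff_nat N).mp h1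
  · -- the cost bound
    have hsumw : Summable (fun k => stageCost Q R (traj A B x w k) (w k)) := by
      rw [← summable_nat_add_iff N]
      have heq : (fun j => stageCost Q R (traj A B x w (j + N)) (w (j + N))) =
          fun j => stageCost Q R (s z j) (uu (s z j)) := by
        funext j
        rw [Nat.add_comm j N, htrajw2, hw]
        simp [Nat.add_sub_cancel_left]
      rw [heq]
      exact hsum z hzXinf
    rw [← Summable.sum_add_tsum_nat_add N hsumw]
    have heq : (fun j => stageCost Q R (traj A B x w (j + N)) (w (j + N))) =
        fun j => stageCost Q R (s z j) (uu (s z j)) := by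
      funext j
      rw [Nat.add_comm j N, htrajw2, hw]
      simp [Nat.add_sub_cancel_left]
    have heq2 : ∀ k ∈ Finset.range N,
        stageCost Q R (traj A B x w k) (w k) = stageCost Q R (traj A B x u k) (u k) := by
      intro k hk
      rw [Finset.mem_range] at hk
      rw [htrajw k (le_of_lt hk), hw]
      simp [hk]
    rw [Finset.sum_congr rfl heq2, heq]
    have := htsum z hzXinf
    linarith
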